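/- Let C ⊆ ℝ^m be a nonempty closed convex set with 0 ∈ C and v ∈ ℝ^m. If there exists r' > 0 with dist(r'·v, C) > 0, then dist(r·v, C) → +∞ as r → +∞. -/

import Mathlib

open Metric Set Filter

theorem stmt1 {m : ℕ} (C : Set (EuclideanSpace ℝ (Fin m)))
    (hne : C.Nonempty) (hcl : IsClosed C) (hconv : Convex ℝ C)
    (h0 : (0 : EuclideanSpace ℝ (Fin m)) ∈ C)
    (v : EuclideanSpace ℝ (Fin m))
    (hfin : ∃ r' > (0 : ℝ), 0 < infDist (r' • v) C) :
    Tendsto (fun r : ℝ => infDist (r • v) C) atTop atTop := by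
  obtain ⟨r', hr', hd⟩ := hfin
  set d := infDist (r' • v) C with hdef
  have key : ∀ r : ℝ, r' ≤ r → r / r' * d ≤ infDist (r • v) C := by
    intro r hr
    have hrpos : 0 < r := lt_of_lt_of_le hr' hr
    by_contra hlt
    push_neg at hlt
    obtain ⟨y, hy, hdy⟩ := (infDist_lt_iff hne).mp hlt
    set t : ℝ := r' / r with ht
    have ht0 : 0 < t := div_pos hr' hrpos
    have ht1 : t ≤ 1 := div_le_one_of_le₀ hr hrpos.le
    have hty : t • y ∈ C := by
      have := hconv h0 hy (a := 1 - t) (b := t) (by linarith) ht0.le (by ring)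
      simpa using this
    have hle : d ≤ dist (r' • v) (t • y) := infDist_le_dist_of_mem hty
    have heq : r' • v = t • (r • v) := by
      rw [smul_smul, ht, div_mul_cancel₀ _ hrpos.ne']
    rw [heq, dist_smul₀, Real.norm_eq_abs, abs_of_pos ht0] at hle
    have h2 : t * dist (r • v) y < t * (r / r' * d) := by
      exact mul_lt_mul_of_pos_left hdy ht0
    have h3 : t * (r / r' * d) = d := by rw [ht]; field_simp [hrpos.ne', hr'.ne']
    linarith
  have hmono : Tendsto (fun r : ℝ => r / r' * d) atTop atTop :=
    Tendsto.atTop_mul_const hd (tendsto_id.atTop_div_const hr')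
  exact tendsto_atTop_mono' atTop
    (by filter_upwards [eventually_ge_atTop r'] with r hr using key r hr) hmono
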